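/- For any vectors v_1,…,v_n in ℂ^d, not all zero, Σ_j Σ_k |⟨v_j,v_k⟩|² ≥ (1/d)(Σ_ℓ ‖v_ℓ‖²)², with equality if and only if (v_j) is a tight frame for ℂ^d (i.e., Σ_j v_j v_j* = c·I for some c > 0). -/

import Mathlib

open Finset Complex

private lemma swap4_aux {n d : ℕ} (f : Fin n → Fin n → Fin d → Fin d → ℂ) :
    ∑ j, ∑ k, ∑ a, ∑ b, f j k a b = ∑ a, ∑ b, ∑ j, ∑ k, f j k a b := by
  calc ∑ j, ∑ k, ∑ a, ∑ b, f j k a b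
      = ∑ j, ∑ a, ∑ k, ∑ b, f j k a b :=
        Finset.sum_congr rfl fun j _ => Finset.sum_comm
    _ = ∑ a, ∑ j, ∑ k, ∑ b, f j k a b := Finset.sum_comm
    _ = ∑ a, ∑ j, ∑ b, ∑ k, f j k a b :=
        Finset.sum_congr rfl fun a _ => Finset.sum_congr rfl fun j _ => Finset.sum_comm
    _ = ∑ a, ∑ b, ∑ j, ∑ k, f j k a b :=
        Finset.sum_congr rfl fun a _ => Finset.sum_comm

/-- Variational characterisation of tight frames for `ℂ^d`:
`Σ Σ |⟨v_j,v_k⟩|² ≥ (1/d)(Σ ‖v‖²)²`, with equality iff `(v_j)` is a tight frame,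
i.e. the frame operator `x ↦ Σ_j ⟨v_j,x⟩ v_j` is a positive multiple of the identity. -/
theorem tight_frame_variational_characterisation (d : ℕ) (hd : 1 ≤ d)
    (n : ℕ) (v : Fin n → EuclideanSpace ℂ (Fin d)) (hv : ∃ j, v j ≠ 0) :
    (1 / d) * (∑ l, ‖v l‖ ^ 2) ^ 2 ≤ ∑ j, ∑ k, ‖(inner ℂ (v j) (v k) : ℂ)‖ ^ 2 ∧
    ((∑ j, ∑ k, ‖(inner ℂ (v j) (v k) : ℂ)‖ ^ 2 = (1 / d) * (∑ l, ‖v l‖ ^ 2) ^ 2) ↔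
      ∃ c : ℝ, 0 < c ∧ ∀ x : EuclideanSpace ℂ (Fin d),
        ∑ j, (inner ℂ (v j) x : ℂ) • v j = (c : ℂ) • x) := by
  classical
  have hns : ∀ z : ℂ, ‖z‖ ^ 2 = Complex.normSq z := fun z => by
    rw [Complex.sq_norm]
  have hinner : ∀ x y : EuclideanSpace ℂ (Fin d),
      (inner ℂ x y : ℂ) = ∑ a, (starRingEnd ℂ) (x a) * y a := fun x y => by
    simp [PiLp.inner_apply, RCLike.inner_apply']
    exact Finset.sum_congr rfl fun _ _ => mul_comm _ _
  set S : Fin d → Fin d → ℂ := fun a b => ∑ j, v j a * (starRingEnd ℂ) (v j b) with hSdef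
  set t : Fin d → ℝ := fun a => ∑ j, Complex.normSq (v j a) with htdef
  -- diagonal of S
  have hdiag : ∀ a, S a a = ((t a : ℝ) : ℂ) := by
    intro a
    simp only [hSdef, htdef, Complex.mul_conj]
    push_cast
    rfl
  -- key1 : the double sum of |<v j, v k>|^2 equals ∑ normSq (S a b)
  have keyterm : ∀ j k : Fin n, ((Complex.normSq (inner ℂ (v j) (v k) : ℂ) : ℂ))
      = ∑ a, ∑ b, v j a * (starRingEnd ℂ) (v j b) * ((starRingEnd ℂ) (v k a) * v k b) := by
    intro j k
    rw [← Complex.mul_conj, hinner, map_sum]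
    simp only [map_mul, Complex.conj_conj]
    rw [Finset.sum_mul_sum, Finset.sum_comm]
    exact Finset.sum_congr rfl fun a _ => Finset.sum_congr rfl fun b _ => by ring
  have keyS : ∀ a b : Fin d, ((Complex.normSq (S a b) : ℂ))
      = ∑ j, ∑ k, v j a * (starRingEnd ℂ) (v j b) * ((starRingEnd ℂ) (v k a) * v k b) := by
    intro a b
    rw [← Complex.mul_conj]
    simp only [hSdef, map_sum, map_mul, Complex.conj_conj]
    rw [Finset.sum_mul_sum]
  have key1 : ∑ j, ∑ k, Complex.normSq (inner ℂ (v j) (v k) : ℂ)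
      = ∑ a, ∑ b, Complex.normSq (S a b) := by
    apply Complex.ofReal_injective
    push_cast
    calc (∑ j, ∑ k, ((Complex.normSq (inner ℂ (v j) (v k) : ℂ) : ℂ)))
        = ∑ j, ∑ k, ∑ a, ∑ b,
            v j a * (starRingEnd ℂ) (v j b) * ((starRingEnd ℂ) (v k a) * v k b) :=
          Finset.sum_congr rfl fun j _ => Finset.sum_congr rfl fun k _ => keyterm j k
      _ = ∑ a, ∑ b, ∑ j, ∑ k,
            v j a * (starRingEnd ℂ) (v j b) * ((starRingEnd ℂ) (v k a) * v k b) :=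
          swap4_aux _
      _ = ∑ a, ∑ b, ((Complex.normSq (S a b) : ℂ)) :=
          Finset.sum_congr rfl fun a _ => Finset.sum_congr rfl fun b _ => (keyS a b).symm
  have hnorm : ∀ l, ‖v l‖ ^ 2 = ∑ a, Complex.normSq (v l a) := fun l => by
    rw [EuclideanSpace.norm_sq_eq]
    simp only [Complex.sq_norm]
  have key2 : ∑ l, ‖v l‖ ^ 2 = ∑ a, t a := by
    rw [Finset.sum_congr rfl fun l _ => hnorm l]
    exact Finset.sum_comm
  set T : ℝ := ∑ a, ∑ b, Complex.normSq (S a b) with hTdef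
  set D : ℝ := ∑ a, t a with hDdef
  set Q : ℝ := ∑ a, (t a) ^ 2 with hQdef
  have hdpos : (0 : ℝ) < d := by exact_mod_cast Nat.lt_of_lt_of_le Nat.zero_lt_one hd
  have hd0 : (d : ℝ) ≠ 0 := ne_of_gt hdpos
  have htnn : ∀ a, 0 ≤ t a := fun a =>
    Finset.sum_nonneg fun j _ => Complex.normSq_nonneg _
  have hdiagsq : ∀ a, Complex.normSq (S a a) = (t a) ^ 2 := fun a => by
    rw [hdiag a, Complex.normSq_ofReal, sq]
  have hQT : Q ≤ T := by
    apply Finset.sum_le_sum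
    intro a _
    rw [← hdiagsq a]
    exact Finset.single_le_sum (f := fun b => Complex.normSq (S a b))
      (fun b _ => Complex.normSq_nonneg _) (Finset.mem_univ a)
  have hexp : (d : ℝ) * ∑ a, (t a - D / d) ^ 2 = d * Q - D ^ 2 := by
    have h1 : ∀ a : Fin d, (t a - D / d) ^ 2
        = t a ^ 2 - (2 * (D / d)) * t a + (D / d) ^ 2 := fun a => by ring
    rw [Finset.sum_congr rfl fun a _ => h1 a, Finset.sum_add_distrib,
      Finset.sum_sub_distrib, ← Finset.mul_sum, Finset.sum_const, Finset.card_univ,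
      Fintype.card_fin, nsmul_eq_mul, ← hQdef, ← hDdef]
    field_simp
    ring
  have hDQ : D ^ 2 ≤ (d : ℝ) * Q := by
    have h0 : 0 ≤ (d : ℝ) * ∑ a, (t a - D / d) ^ 2 :=
      mul_nonneg (le_of_lt hdpos) (Finset.sum_nonneg fun a _ => sq_nonneg _)
    rw [hexp] at h0
    linarith
  -- the inequality
  have hineq : (1 / (d : ℝ)) * D ^ 2 ≤ T := by
    rw [one_div, inv_mul_le_iff₀ hdpos]
    calc D ^ 2 ≤ (d : ℝ) * Q := hDQ
      _ ≤ (d : ℝ) * T := mul_le_mul_of_nonneg_left hQT (le_of_lt hdpos)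
  -- componentwise formula for the frame operator
  have hcomp : ∀ (x : EuclideanSpace ℂ (Fin d)) (a : Fin d),
      (∑ j, (inner ℂ (v j) x : ℂ) • v j) a = ∑ b, S a b * x b := by
    intro x a
    rw [WithLp.ofLp_sum, Finset.sum_apply]
    simp only [PiLp.smul_apply, smul_eq_mul]
    simp only [hinner, hSdef, Finset.sum_mul]
    rw [Finset.sum_comm]
    exact Finset.sum_congr rfl fun b _ => Finset.sum_congr rfl fun j _ => by ring
  have hDpos : 0 < D := by
    obtain ⟨j, hj⟩ := hv
    rw [← key2]
    exact Finset.sum_pos' (fun l _ => sq_nonneg _)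
      ⟨j, Finset.mem_univ j, pow_pos (norm_pos_iff.mpr hj) 2⟩
  constructor
  · -- inequality
    simp only [hns]
    rw [key1, key2]
    exact hineq
  · constructor
    · -- equality → tight frame
      intro heq
      simp only [hns] at heq
      rw [key1, key2] at heq
      -- heq : T = (1/d) * D^2
      have hTD : (d : ℝ) * T = D ^ 2 := by
        rw [heq]; field_simp
      have hQle : (d : ℝ) * Q ≤ (d : ℝ) * T := mul_le_mul_of_nonneg_left hQT (le_of_lt hdpos)
      have hQeqT : Q = T := by
        apply mul_left_cancel₀ hd0
        linarith [hTD, hDQ, hQle]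
      have hDQeq : D ^ 2 = (d : ℝ) * Q := by linarith [hTD, hDQ, hQle]
      set c : ℝ := D / d with hcdef
      have hcpos : 0 < c := div_pos hDpos hdpos
      have htc : ∀ a, t a = c := by
        have h0 : ∑ a, (t a - D / d) ^ 2 = 0 := by
          have h1 : (d : ℝ) * ∑ a, (t a - D / d) ^ 2 = 0 := by
            rw [hexp]; linarith [hDQeq]
          exact (mul_eq_zero.mp h1).resolve_left hd0
        intro a
        have := (Finset.sum_eq_zero_iff_of_nonneg
          (fun a _ => sq_nonneg (t a - D / d))).mp h0 a (Finset.mem_univ a)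
        have := pow_eq_zero_iff (n := 2) (by norm_num) |>.mp this
        rw [hcdef]; linarith
      have hoff : ∀ a b, a ≠ b → S a b = 0 := by
        have hgap : ∀ a : Fin d,
            ∑ b, Complex.normSq (S a b) = Complex.normSq (S a a) := by
          have h0 : ∑ a, ((∑ b, Complex.normSq (S a b)) - (t a) ^ 2) = 0 := by
            rw [Finset.sum_sub_distrib, ← hTdef, ← hQdef]
            linarith [hQeqT]
          have hgapnn : ∀ a : Fin d, 0 ≤ (∑ b, Complex.normSq (S a b)) - (t a) ^ 2 := by
            intro a
            have h := Finset.single_le_sum (f := fun b => Complex.normSq (S a b))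
              (fun b _ => Complex.normSq_nonneg _) (Finset.mem_univ a)
            have h' : (t a) ^ 2 ≤ ∑ b, Complex.normSq (S a b) := by
              simpa [hdiagsq a] using h
            linarith
          intro a
          have := (Finset.sum_eq_zero_iff_of_nonneg
            (fun a _ => hgapnn a)).mp h0 a (Finset.mem_univ a)
          rw [hdiagsq a]
          linarith
        intro a b hab
        have herase : ∑ b' ∈ Finset.univ.erase a, Complex.normSq (S a b') = 0 := by
          have := Finset.sum_erase_add Finset.univ
            (fun b' => Complex.normSq (S a b')) (Finset.mem_univ a)
          rw [hgap a] at this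
          linarith
        have := (Finset.sum_eq_zero_iff_of_nonneg
          (fun b' _ => Complex.normSq_nonneg (S a b'))).mp herase b
          (Finset.mem_erase.mpr ⟨fun h => hab h.symm, Finset.mem_univ b⟩)
        exact Complex.normSq_eq_zero.mp this
      have hSdiag : ∀ a b, S a b = if a = b then ((c : ℝ) : ℂ) else 0 := by
        intro a b
        by_cases h : a = b
        · subst h
          rw [hdiag a, htc a]
          simp
        · simp [h, hoff a b h]
      refine ⟨c, hcpos, fun x => ?_⟩
      ext a
      rw [hcomp x a]
      have : ((c : ℂ) • x) a = (c : ℂ) * x a := rfl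
      rw [this]
      rw [Finset.sum_congr rfl fun b _ => by rw [hSdiag a b]]
      simp [Finset.sum_ite_eq]
    · -- tight frame → equality
      rintro ⟨c, hcpos, hframe⟩
      have hSc : ∀ a b, S a b = if a = b then ((c : ℝ) : ℂ) else 0 := by
        intro a b
        have h : (∑ j, (inner ℂ (v j) (EuclideanSpace.single b (1 : ℂ)) : ℂ) • v j) a
            = ((c : ℂ) • EuclideanSpace.single b (1 : ℂ)) a := by rw [hframe]
        rw [hcomp (EuclideanSpace.single b 1) a] at h
        have hsingle : ∀ b' : Fin d, (EuclideanSpace.single b (1 : ℂ)) b'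
            = if b' = b then 1 else 0 := fun b' => EuclideanSpace.single_apply b 1 b'
        rw [Finset.sum_congr rfl fun b' _ => by rw [hsingle b']] at h
        simp only [mul_ite, mul_one, mul_zero, Finset.sum_ite_eq',
          Finset.mem_univ, if_true] at h
        have h2 : ((c : ℂ) • EuclideanSpace.single b (1 : ℂ)) a
            = (c : ℂ) * (if a = b then 1 else 0) := by
          rw [show ((c : ℂ) • EuclideanSpace.single b (1 : ℂ)) a
            = (c : ℂ) * (EuclideanSpace.single b (1 : ℂ)) a from rfl, hsingle a]
        rw [h2] at h
        rw [h]
        by_cases hab : a = b <;> simp [hab]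
      have htc : ∀ a, t a = c := by
        intro a
        have := hdiag a
        rw [hSc a a, if_pos rfl] at this
        exact_mod_cast this.symm
      have hT : T = d * c ^ 2 := by
        rw [hTdef]
        rw [Finset.sum_congr rfl fun a _ => Finset.sum_congr rfl
          fun b _ => by rw [hSc a b]]
        have : ∀ a : Fin d, ∑ b, Complex.normSq (if a = b then ((c : ℝ) : ℂ) else 0)
            = c ^ 2 := by
          intro a
          rw [Finset.sum_eq_single a (fun b _ hb => by
            rw [if_neg (fun h => hb h.symm)]; simp)
            (fun h => absurd (Finset.mem_univ a) h)]
          rw [if_pos rfl, Complex.normSq_ofReal, sq]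
        rw [Finset.sum_congr rfl fun a _ => this a, Finset.sum_const,
          Finset.card_univ, Fintype.card_fin, nsmul_eq_mul]
      have hD : D = d * c := by
        rw [hDdef, Finset.sum_congr rfl fun a _ => htc a, Finset.sum_const,
          Finset.card_univ, Fintype.card_fin, nsmul_eq_mul]
      simp only [hns]
      rw [key1, key2, hT, hD]
      field_simp
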